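/- Let $f:\Delta\to\Delta$ be a tower map over a probability space $(Y,\mu_Y)$ with integrable return time $r:Y\to\mathbb{Z}^+$ and invariant probability measure $\mu_\Delta=(\mu_Y\times\text{counting})/\bar r$. For $N\ge1$ let $\Delta_{\rm right}=\{(y,\ell): r(y)\ge N\}$ and for $k\ge 1$ let $E_k=\{x\in\Delta: f^jx\in\Delta_{\rm right}\text{ for at least one }j\in\{0,1,\dots,k\}\}$. Then $\mu_\Delta(E_k)\le \frac{1}{\bar r}\bigl(\sum_{n>N}\mu_Y(r\ge n) + (N+k)\,\mu_Y(r\ge N)\bigr)$. -/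

import Mathlib

open MeasureTheory
open scoped Classical ENNReal NNReal

/-- The normalized tower measure `μ_Δ = (μ_Y × counting)/r̄`. -/
noncomputable def muDelta {Y : Type*} [MeasurableSpace Y] (μ : Measure Y) (r : Y → ℕ)
    (E : Set (Y × ℕ)) : ℝ :=
  (1 / ∫ y, (r y : ℝ) ∂μ) *
    ∫ y, (∑ ℓ ∈ Finset.range (r y), if (y, ℓ) ∈ E then (1 : ℝ) else 0) ∂μ

/-- The tower map `f(y,ℓ) = (y,ℓ+1)` for `ℓ+1 < r(y)`, and `f(y,r(y)-1) = (Fy,0)`. -/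
noncomputable def towerMap {Y : Type*} (r : Y → ℕ) (F : Y → Y) (p : Y × ℕ) : Y × ℕ :=
  if p.2 + 1 < r p.1 then (p.1, p.2 + 1) else (F p.1, 0)

section Aux

variable {Y : Type*} [MeasurableSpace Y]

lemma measurable_towerMap {r : Y → ℕ} {F : Y → Y} (hr : Measurable r) (hF : Measurable F) :
    Measurable (towerMap r F) := by
  apply measurable_from_prod_countable_left
  intro ℓ
  unfold towerMap
  simp only
  refine Measurable.ite ?_ (measurable_id.prodMk measurable_const)
    (hF.prodMk measurable_const)
  exact measurableSet_lt measurable_const hr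

lemma measurable_rangeSum {r : Y → ℕ} (hr : Measurable r) {h : ℕ → Y → ℝ}
    (hh : ∀ ℓ, Measurable (h ℓ)) :
    Measurable fun y => ∑ ℓ ∈ Finset.range (r y), h ℓ y := by
  have : (fun y => ∑ ℓ ∈ Finset.range (r y), h ℓ y)
      = (fun p : Y × ℕ => ∑ ℓ ∈ Finset.range p.2, h ℓ p.1) ∘ fun y => (y, r y) := rfl
  rw [this]
  refine Measurable.comp ?_ (measurable_id.prodMk hr)
  apply measurable_from_prod_countable_left
  intro m
  simp only
  exact Finset.measurable_sum _ fun ℓ _ => hh ℓ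

lemma sum_ite_nonneg (m : ℕ) (P : ℕ → Prop) [DecidablePred P] :
    (0:ℝ) ≤ ∑ ℓ ∈ Finset.range m, (if P ℓ then (1:ℝ) else 0) :=
  Finset.sum_nonneg fun _ _ => by positivity

lemma sum_ite_le (m : ℕ) (P : ℕ → Prop) [DecidablePred P] :
    ∑ ℓ ∈ Finset.range m, (if P ℓ then (1:ℝ) else 0) ≤ (m:ℝ) := by
  calc ∑ ℓ ∈ Finset.range m, (if P ℓ then (1:ℝ) else 0)
      ≤ ∑ ℓ ∈ Finset.range m, (1:ℝ) := by
        refine Finset.sum_le_sum fun i _ => ?_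
        split <;> norm_num
    _ = m := by simp

end Aux

/-- Bound for the measure of the set `E_k` of points visiting
`Δ_right = {(y,ℓ) : r(y) ≥ N}` within `k` steps of the tower map. -/
theorem stmt2 {Y : Type*} [MeasurableSpace Y] (μ : Measure Y) [IsProbabilityMeasure μ]
    (r : Y → ℕ) (hr : Measurable r) (hr1 : ∀ y, 1 ≤ r y)
    (hint : Integrable (fun y => (r y : ℝ)) μ)
    (F : Y → Y) (hF : MeasurePreserving F μ μ)
    (N k : ℕ) (hN : 1 ≤ N) (hk : 1 ≤ k) :
    muDelta μ r {x : Y × ℕ | (∃ j ≤ k, N ≤ r ((towerMap r F)^[j] x).1) ∧ x.2 < r x.1}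
      ≤ (1 / ∫ y, (r y : ℝ) ∂μ) *
        ((∑' n : ℕ, (μ {y | N + 1 + n ≤ r y}).toReal)
          + ((N : ℝ) + k) * (μ {y | N ≤ r y}).toReal) := by
  have hFm : Measurable F := hF.measurable
  set f : Y × ℕ → Y × ℕ := towerMap r F with hfdef
  have hfm : Measurable f := measurable_towerMap hr hFm
  set E : Set (Y × ℕ) := {x : Y × ℕ | (∃ j ≤ k, N ≤ r (f^[j] x).1) ∧ x.2 < r x.1} with hEdef
  set B : Set (Y × ℕ) := {p : Y × ℕ | p.2 = 0 ∧ N ≤ r p.1} with hBdef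
  set S : Set Y := {y | N ≤ r y} with hSdef
  have hSm : MeasurableSet S := hr measurableSet_Ici
  -- membership in B and E at fixed levels is measurable in y
  have hmemB : ∀ j ℓ, Measurable fun y => (if f^[j] (y, ℓ) ∈ B then (1:ℝ) else 0) := by
    intro j ℓ
    have hiter : Measurable fun y => f^[j] (y, ℓ) :=
      (hfm.iterate j).comp (measurable_id.prodMk measurable_const)
    have hset : MeasurableSet {y | f^[j] (y, ℓ) ∈ B} := by
      have : {y | f^[j] (y, ℓ) ∈ B}
          = {y | (f^[j] (y, ℓ)).2 = 0} ∩ {y | N ≤ r (f^[j] (y, ℓ)).1} := rfl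
      rw [this]
      exact ((measurable_snd.comp hiter) (measurableSet_singleton 0)).inter
        ((hr.comp (measurable_fst.comp hiter)) measurableSet_Ici)
    exact Measurable.ite hset measurable_const measurable_const
  have hmemE : ∀ ℓ, Measurable fun y => (if (y, ℓ) ∈ E then (1:ℝ) else 0) := by
    intro ℓ
    have hset : MeasurableSet {y | (y, ℓ) ∈ E} := by
      have : {y | (y, ℓ) ∈ E}
          = (⋃ j ∈ Finset.range (k+1), {y | N ≤ r ((f^[j] (y, ℓ))).1}) ∩ {y | ℓ < r y} := by
        ext y
        simp only [hEdef, Set.mem_setOf_eq, Set.mem_inter_iff, Set.mem_iUnion,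
          Finset.mem_range, Nat.lt_succ_iff]
        tauto
      rw [this]
      refine MeasurableSet.inter ?_ (hr measurableSet_Ioi)
      refine MeasurableSet.biUnion (Finset.range (k+1)).countable_toSet fun j _ => ?_
      exact (hr.comp (measurable_fst.comp
        ((hfm.iterate j).comp (measurable_id.prodMk measurable_const)))) measurableSet_Ici
    exact Measurable.ite hset measurable_const measurable_const
  -- sums over the column
  set g : ℕ → Y → ℝ :=
    fun j y => ∑ ℓ ∈ Finset.range (r y), (if f^[j] (y, ℓ) ∈ B then (1:ℝ) else 0) with hgdef
  set G : Y → ℝ :=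
    fun y => ∑ ℓ ∈ Finset.range (r y), (if (y, ℓ) ∈ E then (1:ℝ) else 0) with hGdef
  have hgm : ∀ j, Measurable (g j) := fun j => measurable_rangeSum hr (hmemB j)
  have hGm : Measurable G := measurable_rangeSum hr hmemE
  have intOf : ∀ {u : Y → ℝ}, Measurable u → (∀ y, 0 ≤ u y) → (∀ y, u y ≤ (r y : ℝ)) →
      Integrable u μ := by
    intro u hm h0 h1
    refine hint.mono' hm.aestronglyMeasurable (Filter.Eventually.of_forall fun y => ?_)
    rw [Real.norm_eq_abs, abs_of_nonneg (h0 y)]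
    exact h1 y
  have hgint : ∀ j, Integrable (g j) μ := by
    intro j
    refine intOf (hgm j) (fun y => ?_) (fun y => ?_) <;> simp only [hgdef]
    · exact sum_ite_nonneg _ _
    · exact sum_ite_le _ _
  have hGint : Integrable G μ := by
    refine intOf hGm (fun y => ?_) (fun y => ?_) <;> simp only [hGdef]
    · exact sum_ite_nonneg _ _
    · exact sum_ite_le _ _
  -- the one-step invariance
  have hq : ∀ j, Measurable fun y => (if f^[j] (y, 0) ∈ B then (1:ℝ) else 0) := fun j => hmemB j 0
  have hqint : ∀ j, Integrable (fun y => (if f^[j] (y, 0) ∈ B then (1:ℝ) else 0)) μ := by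
    intro j
    refine (integrable_const (1:ℝ)).mono' (hq j).aestronglyMeasurable
      (Filter.Eventually.of_forall fun y => ?_)
    rw [Real.norm_eq_abs]
    split <;> norm_num
  have hstep : ∀ j, ∫ y, g (j+1) y ∂μ = ∫ y, g j y ∂μ := by
    intro j
    set q : Y → ℝ := fun y => (if f^[j] (y, 0) ∈ B then (1:ℝ) else 0) with hqdef
    have hpt : ∀ y, g (j+1) y = g j y + (q (F y) - q y) := by
      intro y
      obtain ⟨m, hm⟩ : ∃ m, r y = m + 1 := ⟨r y - 1, by have := hr1 y; omega⟩
      have hup : ∀ ℓ < m, f (y, ℓ) = (y, ℓ + 1) := by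
        intro ℓ hℓ
        simp only [hfdef, towerMap]
        rw [if_pos]; omega
      have htop : f (y, m) = (F y, 0) := by
        simp only [hfdef, towerMap]
        rw [if_neg]; omega
      set u : ℕ → ℝ := fun ℓ => if f^[j] (y, ℓ) ∈ B then (1:ℝ) else 0 with hu
      have hgy : g j y = ∑ ℓ ∈ Finset.range m, u ℓ + u m := by
        simp only [hgdef, hm, hu, Finset.sum_range_succ]
      have hgy' : g (j+1) y = ∑ ℓ ∈ Finset.range m, u (ℓ+1) + q (F y) := by
        simp only [hgdef, hm, Finset.sum_range_succ]
        congr 1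
        · refine Finset.sum_congr rfl fun ℓ hℓ => ?_
          rw [Function.iterate_succ_apply, hup ℓ (Finset.mem_range.mp hℓ), hu]
        · rw [Function.iterate_succ_apply, htop, hqdef]
      have h1 := Finset.sum_range_succ u m
      have h2 := Finset.sum_range_succ' u m
      have hq0 : u 0 = q y := rfl
      rw [hgy, hgy']
      rw [← hq0]
      linarith
    have hqF : ∫ y, q (F y) ∂μ = ∫ y, q y ∂μ := by
      have h1 : ∫ y, q y ∂(Measure.map F μ) = ∫ y, q (F y) ∂μ :=
        integral_map hFm.aemeasurable (hq j).aestronglyMeasurable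
      rw [hF.map_eq] at h1
      exact h1.symm
    have hqFint : Integrable (fun y => q (F y)) μ := by
      refine (integrable_const (1:ℝ)).mono' ((hq j).comp hFm).aestronglyMeasurable
        (Filter.Eventually.of_forall fun y => ?_)
      simp only [hqdef, Real.norm_eq_abs]
      split <;> norm_num
    calc ∫ y, g (j+1) y ∂μ = ∫ y, (g j y + (q (F y) - q y)) ∂μ := by
          exact integral_congr_ae (Filter.Eventually.of_forall hpt)
      _ = ∫ y, g j y ∂μ + ∫ y, (q (F y) - q y) ∂μ :=
          integral_add (hgint j) (hqFint.sub (hqint j))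
      _ = ∫ y, g j y ∂μ + (∫ y, q (F y) ∂μ - ∫ y, q y ∂μ) := by
          congr 1
          exact integral_sub hqFint (hqint j)
      _ = ∫ y, g j y ∂μ := by rw [hqF]; ring
  -- base case
  have hbase : ∫ y, g 0 y ∂μ = (μ S).toReal := by
    have hpt : ∀ y, g 0 y = S.indicator (fun _ => (1:ℝ)) y := by
      intro y
      simp only [hgdef, Function.iterate_zero, id_eq, hBdef, Set.mem_setOf_eq,
        Set.indicator_apply, hSdef]
      by_cases hNy : N ≤ r y
      · rw [if_pos hNy]
        rw [Finset.sum_congr rfl (g := fun ℓ => if ℓ = 0 then (1:ℝ) else 0)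
          (fun ℓ _ => by by_cases h : ℓ = 0 <;> simp [h, hNy])]
        rw [Finset.sum_ite_eq' (Finset.range (r y)) 0 (fun _ => (1:ℝ))]
        rw [if_pos (Finset.mem_range.mpr (hr1 y))]
      · rw [if_neg hNy]
        refine Finset.sum_eq_zero fun ℓ _ => ?_
        simp [hNy]
    rw [integral_congr_ae (Filter.Eventually.of_forall hpt), integral_indicator_const _ hSm]
    simp [measureReal_def]
  have hgval : ∀ j, ∫ y, g j y ∂μ = (μ S).toReal := by
    intro j
    induction j with
    | zero => exact hbase
    | succ n ih => rw [hstep n, ih]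
  -- pointwise combinatorial bound
  have hpoint : ∀ y, ∀ ℓ < r y,
      (if (y, ℓ) ∈ E then (1:ℝ) else 0)
        ≤ (if N ≤ r y then (1:ℝ) else 0)
            + ∑ j ∈ Finset.Icc 1 k, (if f^[j] (y, ℓ) ∈ B then (1:ℝ) else 0) := by
    intro y ℓ hℓ
    have hsum0 : (0:ℝ) ≤ ∑ j ∈ Finset.Icc 1 k, (if f^[j] (y, ℓ) ∈ B then (1:ℝ) else 0) :=
      Finset.sum_nonneg fun _ _ => by positivity
    by_cases hE : (y, ℓ) ∈ E
    · rw [if_pos hE]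
      obtain ⟨⟨j, hjk, hPj⟩, -⟩ := hE
      have hex : ∃ n, N ≤ r (f^[n] (y, ℓ)).1 := ⟨j, hPj⟩
      have hj0spec : N ≤ r (f^[Nat.find hex] (y, ℓ)).1 := Nat.find_spec hex
      have hj0le : Nat.find hex ≤ j := Nat.find_le hPj
      rcases hj0 : Nat.find hex with _ | m
      all_goals rw [hj0] at hj0spec hj0le
      · simp only [Function.iterate_zero, id_eq] at hj0spec
        rw [if_pos hj0spec]
        linarith
      · have hmlt : ¬ N ≤ r (f^[m] (y, ℓ)).1 := Nat.find_min hex (by omega)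
        have hmemB' : f^[m+1] (y, ℓ) ∈ B := by
          have hit : f^[m+1] (y, ℓ) = f (f^[m] (y, ℓ)) :=
            Function.iterate_succ_apply' f m (y, ℓ)
          set p := f^[m] (y, ℓ) with hp
          by_cases hcase : p.2 + 1 < r p.1
          · exfalso
            apply hmlt
            rw [hit] at hj0spec
            have : f p = (p.1, p.2 + 1) := by simp only [hfdef, towerMap]; rw [if_pos hcase]
            rw [this] at hj0spec
            exact hj0spec
          · have hfp : f p = (F p.1, 0) := by simp only [hfdef, towerMap]; rw [if_neg hcase]
            rw [hit, hfp]
            refine ⟨rfl, ?_⟩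
            rw [hit, hfp] at hj0spec
            exact hj0spec
        have hterm : (if f^[m+1] (y, ℓ) ∈ B then (1:ℝ) else 0) = 1 := if_pos hmemB'
        have hmem : (m+1) ∈ Finset.Icc 1 k := Finset.mem_Icc.mpr ⟨by omega, by omega⟩
        have hsingle : (1:ℝ) ≤ ∑ j ∈ Finset.Icc 1 k, (if f^[j] (y, ℓ) ∈ B then (1:ℝ) else 0) := by
          calc (1:ℝ) = (if f^[m+1] (y, ℓ) ∈ B then (1:ℝ) else 0) := hterm.symm
            _ ≤ _ := Finset.single_le_sum (f := fun j => if f^[j] (y, ℓ) ∈ B then (1:ℝ) else 0)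
                (fun i _ => by positivity) hmem
        have : (0:ℝ) ≤ if N ≤ r y then (1:ℝ) else 0 := by positivity
        linarith
    · rw [if_neg hE]
      have : (0:ℝ) ≤ if N ≤ r y then (1:ℝ) else 0 := by positivity
      linarith
  -- sum the pointwise bound over the column
  set φ : Y → ℝ := fun y => if N ≤ r y then (r y : ℝ) else 0 with hφdef
  have hφm : Measurable φ := Measurable.ite (hr measurableSet_Ici)
    ((measurable_from_top (f := fun n : ℕ => (n : ℝ))).comp hr) measurable_const
  have hφint : Integrable φ μ := by
    refine intOf hφm (fun y => ?_) (fun y => ?_)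
    · simp only [hφdef]; split <;> positivity
    · simp only [hφdef]; split <;> simp
  have hcol : ∀ y, G y ≤ φ y + ∑ j ∈ Finset.Icc 1 k, g j y := by
    intro y
    calc G y ≤ ∑ ℓ ∈ Finset.range (r y),
          ((if N ≤ r y then (1:ℝ) else 0)
            + ∑ j ∈ Finset.Icc 1 k, (if f^[j] (y, ℓ) ∈ B then (1:ℝ) else 0)) := by
          exact Finset.sum_le_sum fun ℓ hℓ => hpoint y ℓ (Finset.mem_range.mp hℓ)
      _ = (r y : ℝ) * (if N ≤ r y then (1:ℝ) else 0) + ∑ j ∈ Finset.Icc 1 k, g j y := by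
          rw [Finset.sum_add_distrib, Finset.sum_const, Finset.sum_comm]
          simp only [hgdef, nsmul_eq_mul, Finset.card_range]
      _ = φ y + ∑ j ∈ Finset.Icc 1 k, g j y := by
          simp only [hφdef]
          split <;> ring
  have hint1 : ∫ y, G y ∂μ ≤ ∫ y, φ y ∂μ + (k : ℝ) * (μ S).toReal := by
    have h1 : ∫ y, G y ∂μ ≤ ∫ y, (φ y + ∑ j ∈ Finset.Icc 1 k, g j y) ∂μ := by
      refine integral_mono hGint (hφint.add (integrable_finset_sum _ fun j _ => hgint j)) hcol
    have h2 : ∫ y, (φ y + ∑ j ∈ Finset.Icc 1 k, g j y) ∂μ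
        = ∫ y, φ y ∂μ + ∑ j ∈ Finset.Icc 1 k, ∫ y, g j y ∂μ := by
      rw [integral_add hφint (integrable_finset_sum _ fun j _ => hgint j),
        integral_finset_sum _ fun j _ => hgint j]
    have h3 : ∑ j ∈ Finset.Icc 1 k, ∫ y, g j y ∂μ = (k:ℝ) * (μ S).toReal := by
      rw [Finset.sum_congr rfl fun j _ => hgval j, Finset.sum_const, Nat.card_Icc]
      simp [nsmul_eq_mul]
    rw [h2, h3] at h1
    exact h1
  -- compute ∫ φ via ENNReal
  have hlintr : ∫⁻ y, (r y : ℝ≥0∞) ∂μ < ⊤ := by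
    have h := hint.hasFiniteIntegral
    simp only [HasFiniteIntegral] at h
    calc ∫⁻ y, (r y : ℝ≥0∞) ∂μ = ∫⁻ y, ((‖(r y : ℝ)‖₊ : ℝ≥0) : ℝ≥0∞) ∂μ := by
          apply lintegral_congr
          intro y
          rw [Real.nnnorm_natCast]
          simp
      _ < ⊤ := h
  have hptE : ∀ R : ℕ, (if N ≤ R then (R : ℝ≥0∞) else 0)
      = (N : ℝ≥0∞) * (if N ≤ R then 1 else 0)
        + ∑' n : ℕ, (if N + 1 + n ≤ R then (1:ℝ≥0∞) else 0) := by
    intro R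
    have hts : ∑' n : ℕ, (if N + 1 + n ≤ R then (1:ℝ≥0∞) else 0) = ((R - N : ℕ) : ℝ≥0∞) := by
      rw [tsum_eq_sum (s := Finset.range (R - N)) (fun n hn => by
        rw [if_neg]; simp only [Finset.mem_range] at hn; omega)]
      rw [Finset.sum_congr rfl (g := fun _ => (1:ℝ≥0∞)) (fun n hn => by
        rw [if_pos]; simp only [Finset.mem_range] at hn; omega)]
      simp
    rw [hts]
    by_cases hNR : N ≤ R
    · obtain ⟨d, rfl⟩ : ∃ d, R = N + d := ⟨R - N, by omega⟩
      rw [if_pos hNR, if_pos hNR, mul_one, Nat.add_sub_cancel_left]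
      push_cast
      ring
    · rw [if_neg hNR, if_neg hNR, mul_zero, zero_add]
      rw [show R - N = 0 by omega]
      simp
  have hms : ∀ c : ℕ, MeasurableSet {y | c ≤ r y} := fun c => hr measurableSet_Ici
  have hind : ∀ c : ℕ, Measurable fun y => (if c ≤ r y then (1:ℝ≥0∞) else 0) :=
    fun c => Measurable.ite (hms c) measurable_const measurable_const
  have hlintφ : ∫⁻ y, ENNReal.ofReal (φ y) ∂μ
      = (N : ℝ≥0∞) * μ S + ∑' n : ℕ, μ {y | N + 1 + n ≤ r y} := by
    have h0 : ∀ y, ENNReal.ofReal (φ y) = (if N ≤ r y then (r y : ℝ≥0∞) else 0) := by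
      intro y
      simp only [hφdef]
      split
      · rw [ENNReal.ofReal_natCast]
      · simp
    rw [lintegral_congr h0, lintegral_congr (fun y => hptE (r y))]
    rw [lintegral_add_left]
    · congr 1
      · rw [lintegral_const_mul]
        · congr 1
          have : ∀ y, (if N ≤ r y then (1:ℝ≥0∞) else 0) = S.indicator (fun _ => 1) y := by
            intro y
            simp [Set.indicator_apply, hSdef]
          rw [lintegral_congr this, lintegral_indicator hSm _]
          simp
        · exact hind N
      · rw [lintegral_tsum (fun n => (hind (N+1+n)).aemeasurable)]
        congr 1
        ext n
        have : ∀ y, (if N + 1 + n ≤ r y then (1:ℝ≥0∞) else 0)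
            = ({y | N + 1 + n ≤ r y}).indicator (fun _ => 1) y := by
          intro y
          simp [Set.indicator_apply]
        rw [lintegral_congr this, lintegral_indicator (hms (N+1+n)) _]
        simp
    · exact (hind N).const_mul _
  have hle_r : ∀ y, ENNReal.ofReal (φ y) ≤ (r y : ℝ≥0∞) := by
    intro y
    simp only [hφdef]
    split
    · rw [ENNReal.ofReal_natCast]
    · simp
  have hfin : (N : ℝ≥0∞) * μ S + (∑' n : ℕ, μ {y | N + 1 + n ≤ r y}) ≠ ⊤ := by
    rw [← hlintφ]
    exact ((lintegral_mono hle_r).trans_lt hlintr).ne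
  have hTfin : (∑' n : ℕ, μ {y | N + 1 + n ≤ r y}) ≠ ⊤ := by
    intro h
    rw [h] at hfin
    simp at hfin
  have hφval : ∫ y, φ y ∂μ
      = (N : ℝ) * (μ S).toReal + ∑' n : ℕ, (μ {y | N + 1 + n ≤ r y}).toReal := by
    rw [integral_eq_lintegral_of_nonneg_ae (Filter.Eventually.of_forall fun y => by
        simp only [hφdef]; split <;> positivity) hφm.aestronglyMeasurable]
    rw [hlintφ, ENNReal.toReal_add (by
        exact ENNReal.mul_ne_top (by simp) (measure_ne_top μ S)) hTfin]
    rw [ENNReal.toReal_mul, ENNReal.tsum_toReal_eq (fun n => measure_ne_top μ _)]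
    simp
  -- put everything together
  have hfinal : ∫ y, G y ∂μ
      ≤ (∑' n : ℕ, (μ {y | N + 1 + n ≤ r y}).toReal) + ((N : ℝ) + k) * (μ S).toReal := by
    calc ∫ y, G y ∂μ ≤ ∫ y, φ y ∂μ + (k : ℝ) * (μ S).toReal := hint1
      _ = (∑' n : ℕ, (μ {y | N + 1 + n ≤ r y}).toReal) + ((N : ℝ) + k) * (μ S).toReal := by
          rw [hφval]; ring
  have hrpos : (0:ℝ) ≤ 1 / ∫ y, (r y : ℝ) ∂μ := by
    apply div_nonneg zero_le_one
    exact integral_nonneg fun y => by positivity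
  unfold muDelta
  refine mul_le_mul_of_nonneg_left (le_trans (le_of_eq ?_) hfinal) hrpos
  apply integral_congr_ae
  filter_upwards with y
  apply Finset.sum_congr rfl
  intro ℓ _
  congr!
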